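/- Let H be a locally compact Hausdorff topological group, G a group with |G| < 2^{ℵ₀}, and φ : H → G a group homomorphism. Then there exists an open neighborhood V of 1_H such that for every neighborhood V' of 1_H with V' ⊆ V, φ(V') = φ(V). -/

import Mathlib

open scoped Pointwise
open Set Filter Topology

section aux
variable {H : Type*} [Group H] [TopologicalSpace H] [IsTopologicalGroup H]

private lemma my_closure_subset_mul {s : Set H} {U : Set H} (hU : U ∈ nhds (1 : H)) :
    closure s ⊆ s * U := by
  intro x hx
  have h1 : x • U⁻¹ ∈ nhds x := by
    have := smul_mem_nhds_smul x (inv_mem_nhds_one H hU)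
    simpa using this
  obtain ⟨y, hy1, hy2⟩ := mem_closure_iff_nhds.mp hx _ h1
  obtain ⟨u, hu, huy⟩ := hy1
  refine ⟨y, hy2, u⁻¹, by simpa using hu, ?_⟩
  simp only [smul_eq_mul] at huy
  rw [← huy]; group

private lemma exists_small_symm {V : Set H} (hV : V ∈ nhds (1 : H)) :
    ∃ U : Set H, IsOpen U ∧ (1 : H) ∈ U ∧ U⁻¹ = U ∧ U * U * U * U * U * U ⊆ V := by
  obtain ⟨W1, hW1o, hW11, hW1⟩ := exists_open_nhds_one_mul_subset hV
  obtain ⟨W2, hW2o, hW21, hW2⟩ := exists_open_nhds_one_mul_subset (hW1o.mem_nhds hW11)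
  obtain ⟨W3, hW3o, hW31, hW3⟩ := exists_open_nhds_one_mul_subset (hW2o.mem_nhds hW21)
  refine ⟨W3 ∩ W3⁻¹, hW3o.inter hW3o.inv, ⟨hW31, by simpa using hW31⟩,
    by ext x; simp [and_comm], ?_⟩
  have hsub : W3 ∩ W3⁻¹ ⊆ W3 := inter_subset_left
  have h8 : W3 * W3 * W3 * W3 * W3 * W3 * W3 * W3 ⊆ V := by
    calc W3 * W3 * W3 * W3 * W3 * W3 * W3 * W3
        = (W3*W3) * (W3*W3) * (W3*W3) * (W3*W3) := by simp only [mul_assoc]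
      _ ⊆ W2 * W2 * W2 * W2 := by gcongr
      _ = (W2*W2) * (W2*W2) := by simp only [mul_assoc]
      _ ⊆ W1 * W1 := by gcongr
      _ ⊆ V := hW1
  have h6 : W3 * W3 * W3 * W3 * W3 * W3 ⊆ W3 * W3 * W3 * W3 * W3 * W3 * W3 * W3 :=
    (subset_mul_left _ hW31).trans (subset_mul_left _ hW31)
  refine subset_trans ?_ (h6.trans h8)
  gcongr

private lemma two_subset_six {A : Set H} (h1 : (1 : H) ∈ A) :
    A * A ⊆ A * A * A * A * A * A :=
  ((((subset_mul_left _ h1).trans (subset_mul_left _ h1)).trans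
    (subset_mul_left _ h1)).trans (subset_mul_left _ h1))

private lemma mem_six_of {A : Set H} (hs : A⁻¹ = A) {c c' : H}
    (hc : c ∈ A * A * A) (hc' : c' ∈ A * A * A) :
    c' * c⁻¹ ∈ A * A * A * A * A * A := by
  obtain ⟨ab, hab, d, hd, rfl⟩ := hc
  obtain ⟨a, ha, b, hb, rfl⟩ := hab
  have hinv : ∀ z : H, z ∈ A → z⁻¹ ∈ A := fun z hz => hs ▸ Set.inv_mem_inv.mpr hz
  have heq : c' * (a * b * d)⁻¹ = ((c' * d⁻¹) * b⁻¹) * a⁻¹ := by group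
  rw [heq]
  exact Set.mul_mem_mul (Set.mul_mem_mul (Set.mul_mem_mul hc' (hinv d hd)) (hinv b hb)) (hinv a ha)

end aux

/-- If `H` is a locally compact Hausdorff topological group, `G` a group of
cardinality `< 2 ^ ℵ₀` and `φ : H →* G` a (not necessarily continuous)
homomorphism, then there is an open neighborhood `V` of `1` such that
`φ '' V' = φ '' V` for every neighborhood `V' ⊆ V` of `1`. -/
theorem exists_stable_image_nhds_of_locallyCompact
    {H : Type*} [Group H] [TopologicalSpace H] [IsTopologicalGroup H]
    [LocallyCompactSpace H] [T2Space H]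
    {G : Type*} [Group G] (hcard : Cardinal.mk G < 2 ^ Cardinal.aleph0)
    (φ : H →* G) :
    ∃ V : Set H, IsOpen V ∧ (1 : H) ∈ V ∧
      ∀ V' ∈ nhds (1 : H), V' ⊆ V → φ '' V' = φ '' V := by
  classical
  by_contra hcon
  push_neg at hcon
  -- key step: in any open neighborhood of 1 we can find a point whose image avoids
  -- the image of the sixth power of a smaller symmetric open neighborhood
  have key : ∀ t : {U : Set H // IsOpen U ∧ (1:H) ∈ U ∧ U⁻¹ = U},
      ∃ (s : {U : Set H // IsOpen U ∧ (1:H) ∈ U ∧ U⁻¹ = U}) (x : H), x ∈ t.1 ∧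
        (s.1 * s.1 * s.1 * s.1 * s.1 * s.1 ⊆ t.1) ∧
        φ x ∉ φ '' (s.1 * s.1 * s.1 * s.1 * s.1 * s.1) := by
    rintro ⟨U, hUo, hU1, -⟩
    obtain ⟨V', hV'n, hV'sub, hne⟩ := hcon U hUo hU1
    have him : φ '' V' ⊆ φ '' U := Set.image_mono hV'sub
    obtain ⟨g, hgU, hgV'⟩ := Set.exists_of_ssubset (him.ssubset_of_ne hne)
    obtain ⟨x, hxU, hx⟩ := hgU
    obtain ⟨W, hWo, hW1, hWs, hW6⟩ := exists_small_symm hV'n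
    refine ⟨⟨W, hWo, hW1, hWs⟩, x, hxU, hW6.trans (hV'sub.trans ?_), ?_⟩
    · exact fun y hy => hy
    · exact fun hmem => hgV' (hx ▸ Set.image_mono hW6 hmem)
  choose nextU nextx hxmem hsub hnot using key
  -- initial symmetric open neighborhood with compact closure
  obtain ⟨Kc, hKcomp, hKn⟩ := exists_compact_mem_nhds (1 : H)
  have hW01 : (1 : H) ∈ interior Kc := mem_interior_iff_mem_nhds.mpr hKn
  set U0 : Set H := interior Kc ∩ (interior Kc)⁻¹ with hU0def
  have hU0 : IsOpen U0 ∧ (1 : H) ∈ U0 ∧ U0⁻¹ = U0 :=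
    ⟨isOpen_interior.inter isOpen_interior.inv, ⟨hW01, by simpa using hW01⟩,
      by ext x; simp [hU0def, and_comm]⟩
  have hU0clc : IsCompact (closure U0) :=
    hKcomp.of_isClosed_subset isClosed_closure
      (closure_minimal (Set.inter_subset_left.trans interior_subset) hKcomp.isClosed)
  -- the recursively defined sequence of neighborhoods and points
  set Us : ℕ → {U : Set H // IsOpen U ∧ (1:H) ∈ U ∧ U⁻¹ = U} :=
    fun n => Nat.rec ⟨U0, hU0⟩ (fun _ t => nextU t) n with hUs
  set x : ℕ → H := fun n => nextx (Us n) with hx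
  have hUsucc : ∀ n, Us (n + 1) = nextU (Us n) := fun n => rfl
  -- partial products
  set p : Set ℕ → ℕ → H :=
    fun S m => ((List.range m).map (fun i => if i ∈ S then x i else 1)).prod with hp
  have hp0 : ∀ S, p S 0 = 1 := fun S => rfl
  have hpsucc : ∀ S m, p S (m + 1) = p S m * (if m ∈ S then x m else 1) := by
    intro S m
    simp [hp, List.range_succ]
  -- the compact sets
  set K : Set ℕ → ℕ → Set H :=
    fun S m => closure ((p S m) • ((Us m).1 * (Us m).1)) with hK
  have htwo : ∀ n, (Us (n+1)).1 * (Us (n+1)).1 ⊆ (Us n).1 :=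
    fun n => (two_subset_six (Us (n+1)).2.2.1).trans (hsub (Us n))
  have hKsub : ∀ (S : Set ℕ) (n : ℕ), K S (n + 1) ⊆ K S n := by
    intro S n
    apply closure_mono
    have hstep : (if n ∈ S then x n else 1) • ((Us (n+1)).1 * (Us (n+1)).1)
        ⊆ (Us n).1 * (Us n).1 := by
      by_cases hn : n ∈ S
      · rw [if_pos hn]
        rintro y ⟨z, hz, rfl⟩
        have hz2 : z ∈ (Us n).1 := htwo n hz
        exact ⟨x n, hxmem (Us n), z, hz2, rfl⟩
      · rw [if_neg hn, one_smul]
        exact (htwo n).trans (subset_mul_left _ (Us n).2.2.1)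
    calc (p S (n+1)) • ((Us (n+1)).1 * (Us (n+1)).1)
        = (p S n) • ((if n ∈ S then x n else 1) • ((Us (n+1)).1 * (Us (n+1)).1)) := by
          rw [hpsucc, mul_smul]
      _ ⊆ (p S n) • ((Us n).1 * (Us n).1) := Set.smul_set_mono hstep
  have hKmem : ∀ (S : Set ℕ) (m : ℕ), p S m ∈ K S m := by
    intro S m
    apply subset_closure
    exact ⟨1, ⟨1, (Us m).2.2.1, 1, (Us m).2.2.1, mul_one 1⟩, mul_one _⟩
  have hK0 : ∀ S : Set ℕ, IsCompact (K S 0) := by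
    intro S
    have h1 : K S 0 = closure (U0 * U0) := by
      rw [hK]; simp only [hp0, one_smul]; rfl
    rw [h1]
    exact (hU0clc.mul hU0clc).of_isClosed_subset isClosed_closure
      (closure_minimal (Set.mul_subset_mul subset_closure subset_closure)
        (hU0clc.mul hU0clc).isClosed)
  have hcap : ∀ S : Set ℕ, (⋂ m, K S m).Nonempty := fun S =>
    IsCompact.nonempty_iInter_of_sequence_nonempty_isCompact_isClosed (K S) (hKsub S)
      (fun m => ⟨p S m, hKmem S m⟩) (hK0 S) (fun _ => isClosed_closure)
  choose f hf using hcap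
  -- partial products agree below the first difference
  have hpagree : ∀ (S T : Set ℕ) (n : ℕ), (∀ m < n, (m ∈ S ↔ m ∈ T)) → p S n = p T n := by
    intro S T n h
    induction n with
    | zero => rfl
    | succ k ih =>
      rw [hpsucc, hpsucc, ih (fun m hm => h m (hm.trans (Nat.lt_succ_self k)))]
      congr 1
      by_cases hk : k ∈ S
      · rw [if_pos hk, if_pos ((h k (Nat.lt_succ_self k)).mp hk)]
      · rw [if_neg hk, if_neg (fun hkT => hk ((h k (Nat.lt_succ_self k)).mpr hkT))]
  -- the main separation argument
  have main : ∀ S T : Set ℕ, φ (f S) = φ (f T) → ∀ n : ℕ,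
      (∀ m < n, (m ∈ S ↔ m ∈ T)) → n ∈ S → n ∉ T → False := by
    intro S T hST n hagree hnS hnT
    have hU'o : IsOpen (Us (n+1)).1 := (Us (n+1)).2.1
    have hU'1 : (1 : H) ∈ (Us (n+1)).1 := (Us (n+1)).2.2.1
    have hU's : ((Us (n+1)).1)⁻¹ = (Us (n+1)).1 := (Us (n+1)).2.2.2
    have hclos : closure ((Us (n+1)).1 * (Us (n+1)).1)
        ⊆ (Us (n+1)).1 * (Us (n+1)).1 * (Us (n+1)).1 :=
      my_closure_subset_mul (hU'o.mem_nhds hU'1)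
    have hfS : f S ∈ (p S (n+1)) • closure ((Us (n+1)).1 * (Us (n+1)).1) := by
      rw [← closure_smul]
      exact mem_iInter.mp (hf S) (n+1)
    have hfT : f T ∈ (p T (n+1)) • closure ((Us (n+1)).1 * (Us (n+1)).1) := by
      rw [← closure_smul]
      exact mem_iInter.mp (hf T) (n+1)
    obtain ⟨c, hc, hcEq⟩ := hfS
    obtain ⟨c', hc', hc'Eq⟩ := hfT
    simp only [smul_eq_mul] at hcEq hc'Eq
    have hcm : c ∈ (Us (n+1)).1 * (Us (n+1)).1 * (Us (n+1)).1 := hclos hc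
    have hc'm : c' ∈ (Us (n+1)).1 * (Us (n+1)).1 * (Us (n+1)).1 := hclos hc'
    have hpeq : p S n = p T n := hpagree S T n hagree
    have hPS : p S (n+1) = p S n * x n := by rw [hpsucc, if_pos hnS]
    have hPT : p T (n+1) = p S n := by rw [hpsucc, if_neg hnT, mul_one, hpeq]
    have heq : φ (p S n) * (φ (x n) * φ c) = φ (p S n) * φ c' := by
      have h1 : φ (f S) = φ (p S n) * (φ (x n) * φ c) := by
        rw [← hcEq, map_mul, hPS, map_mul, mul_assoc]
      have h2 : φ (f T) = φ (p S n) * φ c' := by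
        rw [← hc'Eq, map_mul, hPT]
      rw [← h1, ← h2, hST]
    have hxn : φ (x n) = φ (c' * c⁻¹) := by
      have h3 : φ c' = φ (x n) * φ c := (mul_left_cancel heq).symm
      rw [map_mul, map_inv, h3]
      group
    have hmem6 : c' * c⁻¹ ∈ (Us (n+1)).1 * (Us (n+1)).1 * (Us (n+1)).1 * (Us (n+1)).1
        * (Us (n+1)).1 * (Us (n+1)).1 := mem_six_of hU's hcm hc'm
    exact hnot (Us n) ⟨c' * c⁻¹, hmem6, hxn.symm⟩
  -- injectivity of `S ↦ φ (f S)`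
  have hinj : Function.Injective (fun S : Set ℕ => φ (f S)) := by
    intro S T hST
    by_contra hne
    have hex : ∃ n, ¬ (n ∈ S ↔ n ∈ T) := by
      by_contra hall
      push_neg at hall
      exact hne (Set.ext hall)
    have hn := Nat.find_spec hex
    have hmin : ∀ m < Nat.find hex, (m ∈ S ↔ m ∈ T) :=
      fun m hm => not_not.mp (Nat.find_min hex hm)
    by_cases hnS : Nat.find hex ∈ S
    · have hnT : Nat.find hex ∉ T := fun h => hn ⟨fun _ => h, fun _ => hnS⟩
      exact main S T hST (Nat.find hex) hmin hnS hnT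
    · have hnT : Nat.find hex ∈ T := by
        by_contra h
        exact hn ⟨fun hs => absurd hs hnS, fun ht => absurd ht h⟩
      exact main T S hST.symm (Nat.find hex) (fun m hm => (hmin m hm).symm) hnT hnS
  -- cardinality contradiction
  have hle := Cardinal.lift_mk_le'.mpr ⟨⟨fun S : Set ℕ => φ (f S), hinj⟩⟩
  simp only [Cardinal.mk_set, Cardinal.mk_nat, Cardinal.lift_two_power, Cardinal.lift_aleph0,
    Cardinal.lift_id, Cardinal.lift_uzero] at hle
  exact absurd hcard (not_lt.mpr hle)
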